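/- Under the assumptions of the previous block decomposition, with M positive definite and K₁, K_e positive semidefinite, a pair (v,u) lies in the kernel of the block matrix A = [[αM + K₁, K₁],[K₁, K₁ + K_e]] if and only if v = 0, K₁ u = 0 and K_e u = 0. In particular, if ker K₁ ∩ ker K_e consists only of constant vectors, the discrete bidomain solution (V_m, u_e) is unique up to adding a constant to u_e. -/

import Mathlib

open Matrix

lemma sum_elim_eq_zero {N : ℕ} {a b : Fin N → ℝ} (h : Sum.elim a b = 0) :
    a = 0 ∧ b = 0 := by
  constructor <;> funext i
  · exact congrFun h (Sum.inl i)
  · exact congrFun h (Sum.inr i)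

/-- Kernel of the bidomain block matrix `A = [[αM + K₁, K₁], [K₁, K₁ + K_e]]`:
`(v,u) ∈ ker A ↔ v = 0 ∧ K₁ u = 0 ∧ K_e u = 0`. In particular, if
`ker K₁ ∩ ker K_e` consists only of constant vectors, the discrete bidomain solution is
unique up to adding a constant to the second component. -/
theorem bidomain_block_kernel (N : ℕ)
    (M K₁ Ke : Matrix (Fin N) (Fin N) ℝ)
    (hM : M.PosDef) (hK₁ : K₁.PosSemidef) (hKe : Ke.PosSemidef)
    (α : ℝ) (hα : 0 < α)
    (A : Matrix (Fin N ⊕ Fin N) (Fin N ⊕ Fin N) ℝ)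
    (hA : A = Matrix.fromBlocks (α • M + K₁) K₁ K₁ (K₁ + Ke)) :
    (∀ v u : Fin N → ℝ,
      A *ᵥ Sum.elim v u = 0 ↔ v = 0 ∧ K₁ *ᵥ u = 0 ∧ Ke *ᵥ u = 0) ∧
    ((∀ u : Fin N → ℝ, K₁ *ᵥ u = 0 → Ke *ᵥ u = 0 → ∃ c : ℝ, u = fun _ => c) →
      ∀ (b : Fin N ⊕ Fin N → ℝ) (v u v' u' : Fin N → ℝ),
        A *ᵥ Sum.elim v u = b → A *ᵥ Sum.elim v' u' = b →
        v' = v ∧ ∃ c : ℝ, u' = u + fun _ => c) := by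
  subst hA
  have key : ∀ v u : Fin N → ℝ,
      Matrix.fromBlocks (α • M + K₁) K₁ K₁ (K₁ + Ke) *ᵥ Sum.elim v u = 0 ↔
        v = 0 ∧ K₁ *ᵥ u = 0 ∧ Ke *ᵥ u = 0 := by
    intro v u
    rw [Matrix.fromBlocks_mulVec]
    constructor
    · intro h
      obtain ⟨h1, h2⟩ := sum_elim_eq_zero h
      simp only [Matrix.add_mulVec, Matrix.smul_mulVec, Sum.elim_comp_inl,
        Sum.elim_comp_inr] at h1 h2
      -- quadratic form identity
      have hq : α * (v ⬝ᵥ M *ᵥ v) + (v + u) ⬝ᵥ K₁ *ᵥ (v + u) + u ⬝ᵥ Ke *ᵥ u = 0 := by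
        have e1 : v ⬝ᵥ (α • (M *ᵥ v) + K₁ *ᵥ v + K₁ *ᵥ u) = 0 := by rw [h1, dotProduct_zero]
        have e2 : u ⬝ᵥ (K₁ *ᵥ v + (K₁ *ᵥ u + Ke *ᵥ u)) = 0 := by rw [h2, dotProduct_zero]
        have hKT : K₁ᵀ = K₁ := by
          ext i j; have := congrFun (congrFun hK₁.1 i) j; simpa using this
        have hsym : u ⬝ᵥ K₁ *ᵥ v = v ⬝ᵥ K₁ *ᵥ u := by
          rw [dotProduct_mulVec, ← Matrix.mulVec_transpose, hKT]
          exact (dotProduct_comm _ _)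
        have := congrArg₂ (· + ·) e1 e2
        simp only [add_zero] at this
        rw [Matrix.mulVec_add]
        simp only [dotProduct_add, dotProduct_smul, smul_eq_mul, add_dotProduct] at this ⊢
        linarith [hsym]
      have t1 : 0 ≤ v ⬝ᵥ M *ᵥ v := by simpa using hM.posSemidef.dotProduct_mulVec_nonneg v
      have t2 : 0 ≤ (v + u) ⬝ᵥ K₁ *ᵥ (v + u) := by simpa using hK₁.dotProduct_mulVec_nonneg (v + u)
      have t3 : 0 ≤ u ⬝ᵥ Ke *ᵥ u := by simpa using hKe.dotProduct_mulVec_nonneg u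
      have hv : v = 0 := by
        by_contra hv
        have := hM.dotProduct_mulVec_pos hv
        rw [star_trivial] at this
        nlinarith
      subst hv
      simp only [zero_add] at hq t2 ⊢
      have hK₁u : K₁ *ᵥ u = 0 := by
        have : u ⬝ᵥ K₁ *ᵥ u = 0 := by nlinarith
        simpa using (hK₁.dotProduct_mulVec_zero_iff u).mp (by simpa using this)
      have hKeu : Ke *ᵥ u = 0 := by
        have : u ⬝ᵥ Ke *ᵥ u = 0 := by nlinarith
        simpa using (hKe.dotProduct_mulVec_zero_iff u).mp (by simpa using this)
      exact ⟨by simp, hK₁u, hKeu⟩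
    · rintro ⟨rfl, h1, h2⟩
      simp [Matrix.add_mulVec, h1, h2]
  refine ⟨key, fun hker b v u v' u' h h' => ?_⟩
  have hdiff : Matrix.fromBlocks (α • M + K₁) K₁ K₁ (K₁ + Ke) *ᵥ Sum.elim (v' - v) (u' - u) = 0 := by
    have : Sum.elim (v' - v) (u' - u) = Sum.elim v' u' - Sum.elim v u := by
      funext i; cases i <;> simp
    rw [this, Matrix.mulVec_sub, h, h', sub_self]
  obtain ⟨hv, h1, h2⟩ := (key _ _).mp hdiff
  obtain ⟨c, hc⟩ := hker _ h1 h2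
  refine ⟨by rwa [sub_eq_zero] at hv, c, ?_⟩
  have := hc
  funext i
  have : u' i - u i = c := congrFun hc i
  simp [Pi.add_apply]; linarith
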